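/- Let T := conv{(0,0,0),(572,286,143),(390,195,−585),(495,−330,−165)} ⊂ ℝ³. Then there exists a polynomial F ∈ ℚ[x,y,z] of total degree 572 whose degree-572 homogeneous component equals x^572 and which vanishes at every point of T ∩ ℤ³. -/

import Mathlib

open MvPolynomial

/-- The canonical embedding of `ℤ^k` into `ℝ^k`. -/
def castR {k : ℕ} (p : Fin k → ℤ) : Fin k → ℝ := fun i => (p i : ℝ)

/-- The tetrahedron `conv{(0,0,0),(572,286,143),(390,195,−585),(495,−330,−165)}`,
a `GL(3,ℤ)`-transform of the Riemann–Roch polytope of `ℙ(7,11,13,15)`. -/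
noncomputable def TEx : Set (Fin 3 → ℝ) :=
  convexHull ℝ {![0, 0, 0], ![572, 286, 143], ![390, 195, -585], ![495, -330, -165]}

lemma TEx_halfspace {a b c d : ℝ}
    (h1 : d ≤ 0) (h2 : d ≤ a * 572 + b * 286 + c * 143)
    (h3 : d ≤ a * 390 + b * 195 + c * (-585))
    (h4 : d ≤ a * 495 + b * (-330) + c * (-165)) :
    ∀ v ∈ TEx, d ≤ a * v 0 + b * v 1 + c * v 2 := by
  have hlin : IsLinearMap ℝ (fun w : Fin 3 → ℝ => a * w 0 + b * w 1 + c * w 2) := by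
    constructor
    · intro x y; simp [Pi.add_apply]; ring
    · intro r x; simp [Pi.smul_apply, smul_eq_mul]; ring
  intro v hv
  have hsub : ({![0, 0, 0], ![572, 286, 143], ![390, 195, -585], ![495, -330, -165]} :
      Set (Fin 3 → ℝ)) ⊆ {w | d ≤ a * w 0 + b * w 1 + c * w 2} := by
    intro x hx
    simp only [Set.mem_insert_iff, Set.mem_singleton_iff] at hx
    rcases hx with h | h | h | h <;> subst h <;> simp <;> linarith
  exact convexHull_min hsub (convex_halfSpace_ge hlin d) hv

lemma lattice_ineqs (p : Fin 3 → ℤ) (hp : castR p ∈ TEx) :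
    0 ≤ p 0 - 2 * p 1 ∧ 0 ≤ p 1 - 2 * p 2 ∧ 0 ≤ p 0 + p 1 + p 2 ∧
      4 * p 0 - p 2 ≤ 2145 := by
  have e0 : (castR p) 0 = (p 0 : ℝ) := rfl
  have e1 : (castR p) 1 = (p 1 : ℝ) := rfl
  have e2 : (castR p) 2 = (p 2 : ℝ) := rfl
  have i1 := TEx_halfspace (a := 1) (b := -2) (c := 0) (d := 0)
    (by norm_num) (by norm_num) (by norm_num) (by norm_num) _ hp
  have i2 := TEx_halfspace (a := 0) (b := 1) (c := -2) (d := 0)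
    (by norm_num) (by norm_num) (by norm_num) (by norm_num) _ hp
  have i3 := TEx_halfspace (a := 1) (b := 1) (c := 1) (d := 0)
    (by norm_num) (by norm_num) (by norm_num) (by norm_num) _ hp
  have i4 := TEx_halfspace (a := -4) (b := 0) (c := 1) (d := -2145)
    (by norm_num) (by norm_num) (by norm_num) (by norm_num) _ hp
  rw [e0, e1, e2] at i1 i2 i3 i4
  refine ⟨?_, ?_, ?_, ?_⟩
  · have j : (0:ℝ) ≤ ((p 0 - 2 * p 1 : ℤ) : ℝ) := by push_cast; linarith
    exact_mod_cast j
  · have j : (0:ℝ) ≤ ((p 1 - 2 * p 2 : ℤ) : ℝ) := by push_cast; linarith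
    exact_mod_cast j
  · have j : (0:ℝ) ≤ ((p 0 + p 1 + p 2 : ℤ) : ℝ) := by push_cast; linarith
    exact_mod_cast j
  · have j : ((4 * p 0 - p 2 : ℤ) : ℝ) ≤ 2145 := by push_cast; linarith
    exact_mod_cast j

lemma td_neg (p : MvPolynomial (Fin 3) ℚ) : (-p).totalDegree = p.totalDegree := by
  simp [totalDegree, support_neg]

/-- Expansion of the product `∏ (X 0 - j)` as `X 0 ^ card + lower order`. -/
lemma prod_expand (S : Finset ℕ) :
    ∃ R : MvPolynomial (Fin 3) ℚ,
      (∏ j ∈ S, ((X 0 : MvPolynomial (Fin 3) ℚ) - C (j : ℚ))) = X 0 ^ S.card + R ∧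
        (R = 0 ∨ R.totalDegree < S.card) := by
  classical
  induction S using Finset.induction_on with
  | empty => exact ⟨0, by simp, Or.inl rfl⟩
  | insert _ _ ha ih =>
    rename_i a S
    obtain ⟨R, hR, hd⟩ := ih
    set n := S.card with hn
    set A : MvPolynomial (Fin 3) ℚ := X 0 * R with hA
    set B : MvPolynomial (Fin 3) ℚ := C (a : ℚ) * X 0 ^ n with hB
    set Cc : MvPolynomial (Fin 3) ℚ := C (a : ℚ) * R with hCc
    refine ⟨A + -B + -Cc, ?_, Or.inr ?_⟩
    · rw [Finset.prod_insert ha, hR, Finset.card_insert_of_notMem ha, hA, hB, hCc, pow_succ,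
        ← hn]
      ring
    · rw [Finset.card_insert_of_notMem ha, ← hn]
      have hBd : (-B).totalDegree < n + 1 := by
        rw [td_neg, hB]
        have := totalDegree_mul (C (a : ℚ) : MvPolynomial (Fin 3) ℚ) (X 0 ^ n)
        rw [totalDegree_C, totalDegree_X_pow] at this
        omega
      have hAd : (-A).totalDegree < n + 1 := by
        rw [td_neg, hA]
        rcases hd with h0 | hlt
        · subst h0; simp
        · have := totalDegree_mul (X 0 : MvPolynomial (Fin 3) ℚ) R
          rw [totalDegree_X] at this
          omega
      have hCd : (-Cc).totalDegree < n + 1 := by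
        rw [td_neg, hCc]
        rcases hd with h0 | hlt
        · subst h0; simp
        · have := totalDegree_mul (C (a : ℚ) : MvPolynomial (Fin 3) ℚ) R
          rw [totalDegree_C] at this
          omega
      have hAd' : A.totalDegree < n + 1 := by rwa [td_neg] at hAd
      exact lt_of_le_of_lt (totalDegree_add _ _)
        (max_lt (lt_of_le_of_lt (totalDegree_add _ _) (max_lt hAd' hBd)) hCd)

/-- There is a polynomial `F ∈ ℚ[x,y,z]` of total degree `572` with degree-`572`
homogeneous component `x^572` vanishing at all lattice points of the tetrahedron `TEx`. -/
theorem tetrahedron_hypersurface :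
    ∃ F : MvPolynomial (Fin 3) ℚ, F.totalDegree = 572 ∧
      MvPolynomial.homogeneousComponent 572 F = (MvPolynomial.X 0) ^ 572 ∧
      ∀ p : Fin 3 → ℤ, castR p ∈ TEx →
        MvPolynomial.eval (fun i => (p i : ℚ)) F = 0 := by
  classical
  set Q : MvPolynomial (Fin 3) ℚ := X 0 ^ 2 - X 0 - C 1142 * X 1 with hQdef
  set P : MvPolynomial (Fin 3) ℚ :=
    ∏ j ∈ Finset.Icc (2:ℕ) 571, ((X 0 : MvPolynomial (Fin 3) ℚ) - C (j : ℚ)) with hPdef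
  refine ⟨Q * P, ?_⟩
  have hcard : (Finset.Icc (2:ℕ) 571).card = 570 := by rw [Nat.card_Icc]
  obtain ⟨R, hR, hd⟩ := prod_expand (Finset.Icc (2:ℕ) 571)
  rw [hcard] at hR hd
  set R' : MvPolynomial (Fin 3) ℚ :=
    Q * R - (X 0 + C 1142 * X 1) * X 0 ^ 570 with hR'def
  have hF : Q * P = X 0 ^ 572 + R' := by
    rw [hPdef, hR, hR'def, hQdef]
    ring
  have hQtd : Q.totalDegree ≤ 2 := by
    have key : Q = X 0 ^ 2 + -(X 0) + -(C 1142 * X 1) := by rw [hQdef]; ring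
    rw [key]
    refine le_trans (totalDegree_add _ _) (max_le (le_trans (totalDegree_add _ _)
      (max_le ?_ ?_)) ?_)
    · rw [totalDegree_X_pow]
    · rw [td_neg, totalDegree_X]; omega
    · rw [td_neg]
      have := totalDegree_mul (C (1142 : ℚ) : MvPolynomial (Fin 3) ℚ) (X 1)
      rw [totalDegree_C, totalDegree_X] at this
      omega
  have hLtd : ((X 0 + C 1142 * X 1) * X 0 ^ 570 : MvPolynomial (Fin 3) ℚ).totalDegree
      ≤ 571 := by
    refine le_trans (totalDegree_mul _ _) ?_
    have h1 : ((X 0 + C 1142 * X 1 : MvPolynomial (Fin 3) ℚ)).totalDegree ≤ 1 := by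
      refine le_trans (totalDegree_add _ _) (max_le ?_ ?_)
      · rw [totalDegree_X]
      · have := totalDegree_mul (C (1142 : ℚ) : MvPolynomial (Fin 3) ℚ) (X 1)
        rw [totalDegree_C, totalDegree_X] at this
        omega
    have h2 : ((X 0 : MvPolynomial (Fin 3) ℚ) ^ 570).totalDegree = 570 :=
      totalDegree_X_pow _ _
    omega
  have hR'td : R'.totalDegree < 572 := by
    have key : R' = Q * R + -((X 0 + C 1142 * X 1) * X 0 ^ 570) := by rw [hR'def]; ring
    rw [key]
    refine lt_of_le_of_lt (totalDegree_add _ _) (max_lt ?_ ?_)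
    · rcases hd with h0 | hlt
      · subst h0; simp
      · have := totalDegree_mul Q R
        omega
    · rw [td_neg]; omega
  refine ⟨?_, ?_, ?_⟩
  · -- totalDegree
    rw [hF]
    refine le_antisymm ?_ ?_
    · refine le_trans (totalDegree_add _ _) (max_le ?_ (le_of_lt hR'td))
      rw [totalDegree_X_pow]
    · have hc : coeff (Finsupp.single 0 572) (X 0 ^ 572 + R' : MvPolynomial (Fin 3) ℚ)
          = 1 := by
        rw [coeff_add, coeff_X_pow, if_pos rfl,
          coeff_eq_zero_of_totalDegree_lt (by
            rw [Finsupp.support_single_ne_zero _ (by norm_num : (572:ℕ) ≠ 0)]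
            simpa using hR'td), add_zero]
      generalize (X 0 ^ 572 + R' : MvPolynomial (Fin 3) ℚ) = Y at hc ⊢
      have hmem : Finsupp.single (0 : Fin 3) 572 ∈
          Y.support := by
        rw [mem_support_iff, hc]; norm_num
      have := le_totalDegree hmem
      simpa using this
  · -- homogeneous component
    rw [hF, map_add, homogeneousComponent_eq_zero 572 R' hR'td, add_zero,
      homogeneousComponent_of_mem ((mem_homogeneousSubmodule _ _).mpr
        (isHomogeneous_X_pow 0 572)), if_pos rfl]
  · -- vanishing
    intro p hp
    obtain ⟨i1, i2, i3, i4⟩ := lattice_ineqs p hp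
    rw [map_mul]
    have hQval : eval (fun i => (p i : ℚ)) Q
        = (p 0 : ℚ) ^ 2 - (p 0 : ℚ) - 1142 * (p 1 : ℚ) := by
      rw [hQdef]; simp
    have hcases : (p 0 = 0 ∧ p 1 = 0) ∨ (p 0 = 1 ∧ p 1 = 0) ∨
        (p 0 = 572 ∧ p 1 = 286) ∨ (2 ≤ p 0 ∧ p 0 ≤ 571) := by omega
    rcases hcases with ⟨h0, h1⟩ | ⟨h0, h1⟩ | ⟨h0, h1⟩ | ⟨hlo, hhi⟩
    · rw [hQval, h0, h1]; norm_num
    · rw [hQval, h0, h1]; norm_num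
    · rw [hQval, h0, h1]; norm_num
    · have hPval : eval (fun i => (p i : ℚ)) P = 0 := by
        rw [hPdef, map_prod]
        refine Finset.prod_eq_zero (i := (p 0).toNat) ?_ ?_
        · rw [Finset.mem_Icc]; omega
        · have ht : ((p 0).toNat : ℤ) = p 0 := Int.toNat_of_nonneg (by omega)
          simp only [map_sub, eval_X, eval_C]
          have hq : (((p 0).toNat : ℕ) : ℚ) = (p 0 : ℚ) := by exact_mod_cast ht
          rw [hq]; ring
      rw [hPval, mul_zero]
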